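/- With Δ and ⟨·,·⟩ as the signature-(e, n−e) Laplacian and Hermitian form on ℂ^n, for any fixed vector p ∈ ℂ^n one has Δ²{⟨z,z⟩²·⟨p,z⟩} = 2(n+1)(n+2)·⟨p,z⟩. -/
import Mathlib


open MvPolynomial

/-- Signature coefficients of the Hermitian form of signature `(e, n-e)`. -/
noncomputable def eps (n e : ℕ) (k : Fin n) : ℂ := if (k : ℕ) < e then 1 else -1

/-- The polynomial `⟨z,z⟩ = Σ ε_k z^k z̄^k`. -/
noncomputable def hermPoly (n e : ℕ) : MvPolynomial (Fin n ⊕ Fin n) ℂ :=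
  ∑ k : Fin n, C (eps n e k) * X (Sum.inl k) * X (Sum.inr k)

/-- The polynomial `⟨p,z⟩ = Σ ε_k p^k z̄^k` for a fixed vector `p ∈ ℂⁿ`
(linear in `p`, antilinear in `z`). -/
noncomputable def hermPolyP (n e : ℕ) (p : Fin n → ℂ) : MvPolynomial (Fin n ⊕ Fin n) ℂ :=
  ∑ k : Fin n, C (eps n e k) * C (p k) * X (Sum.inr k)

/-- The signature-`(e, n-e)` Laplacian `Δ = Σ ε_k ∂²/∂z^k ∂z̄^k`. -/
noncomputable def Lap (n e : ℕ) (P : MvPolynomial (Fin n ⊕ Fin n) ℂ) :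
    MvPolynomial (Fin n ⊕ Fin n) ℂ :=
  ∑ k : Fin n, C (eps n e k) * pderiv (Sum.inl k) (pderiv (Sum.inr k) P)

lemma eps_sq (n e : ℕ) (k : Fin n) : eps n e k * eps n e k = 1 := by
  unfold eps; split <;> ring

lemma epsC_sq (n e : ℕ) (k : Fin n) :
    (C (eps n e k) : MvPolynomial (Fin n ⊕ Fin n) ℂ) * C (eps n e k) = 1 := by
  rw [← map_mul, eps_sq, map_one]

lemma pd_inr_Q (n e : ℕ) (j : Fin n) :
    pderiv (Sum.inr j) (hermPoly n e) = C (eps n e j) * X (Sum.inl j) := by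
  unfold hermPoly
  rw [map_sum, Finset.sum_eq_single j]
  · simp [pderiv_mul]
  · intro k _ hk
    simp [pderiv_mul, pderiv_X_of_ne, hk]
  · simp

lemma pd_inl_Q (n e : ℕ) (j : Fin n) :
    pderiv (Sum.inl j) (hermPoly n e) = C (eps n e j) * X (Sum.inr j) := by
  unfold hermPoly
  rw [map_sum, Finset.sum_eq_single j]
  · simp [pderiv_mul]; ring
  · intro k _ hk
    simp [pderiv_mul, pderiv_X_of_ne, hk]
  · simp

lemma pd_inl_P (n e : ℕ) (p : Fin n → ℂ) (j : Fin n) :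
    pderiv (Sum.inl j) (hermPolyP n e p) = 0 := by
  unfold hermPolyP
  rw [map_sum]
  apply Finset.sum_eq_zero
  intro k _
  simp [pderiv_mul]

lemma pd_inr_P (n e : ℕ) (p : Fin n → ℂ) (j : Fin n) :
    pderiv (Sum.inr j) (hermPolyP n e p) = C (eps n e j) * C (p j) := by
  unfold hermPolyP
  rw [map_sum, Finset.sum_eq_single j]
  · simp [pderiv_mul]
  · intro k _ hk
    simp [pderiv_mul, pderiv_X_of_ne, hk]
  · simp

lemma lap_QP (n e : ℕ) (p : Fin n → ℂ) :
    Lap n e (hermPoly n e * hermPolyP n e p) = C ((n : ℂ) + 1) * hermPolyP n e p := by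
  unfold Lap
  have h : ∀ k : Fin n,
      C (eps n e k) * pderiv (Sum.inl k) (pderiv (Sum.inr k)
        (hermPoly n e * hermPolyP n e p))
      = hermPolyP n e p + C (eps n e k) * C (p k) * X (Sum.inr k) := by
    intro k
    simp only [pderiv_mul, map_add, pd_inl_Q, pd_inr_Q, pd_inl_P, pd_inr_P,
      pderiv_X_self, pderiv_C,
      pderiv_X_of_ne (show (Sum.inl k : Fin n ⊕ Fin n) ≠ Sum.inr k by simp),
      mul_zero, zero_mul, add_zero, zero_add, mul_one, one_mul]
    linear_combination (hermPolyP n e p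
      + C (eps n e k) * C (p k) * X (Sum.inr k)) * epsC_sq n e k
  rw [Finset.sum_congr rfl (fun k _ => h k), Finset.sum_add_distrib,
    Finset.sum_const, Finset.card_univ, Fintype.card_fin,
    show (∑ k : Fin n, C (eps n e k) * C (p k) * X (Sum.inr k)) = hermPolyP n e p from rfl,
    nsmul_eq_mul, show ((n : ℕ) : MvPolynomial (Fin n ⊕ Fin n) ℂ) = C (n : ℂ) by simp,
    map_add, map_one]
  ring

lemma lap_Q2P (n e : ℕ) (p : Fin n → ℂ) :
    Lap n e (hermPoly n e ^ 2 * hermPolyP n e p)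
      = C (2 * (n : ℂ) + 4) * (hermPoly n e * hermPolyP n e p) := by
  unfold Lap
  have h : ∀ k : Fin n,
      C (eps n e k) * pderiv (Sum.inl k) (pderiv (Sum.inr k)
        (hermPoly n e ^ 2 * hermPolyP n e p))
      = 2 * ((C (eps n e k) * X (Sum.inl k) * X (Sum.inr k)) * hermPolyP n e p)
        + 2 * (hermPoly n e * hermPolyP n e p)
        + 2 * (hermPoly n e * (C (eps n e k) * C (p k) * X (Sum.inr k))) := by
    intro k
    rw [sq]
    simp only [pderiv_mul, map_add, pd_inl_Q, pd_inr_Q, pd_inl_P, pd_inr_P,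
      pderiv_X_self, pderiv_C,
      pderiv_X_of_ne (show (Sum.inl k : Fin n ⊕ Fin n) ≠ Sum.inr k by simp),
      mul_zero, zero_mul, add_zero, zero_add, mul_one, one_mul]
    linear_combination (2 * hermPoly n e * hermPolyP n e p
      + 2 * C (eps n e k) * X (Sum.inl k) * X (Sum.inr k) * hermPolyP n e p
      + 2 * C (eps n e k) * hermPoly n e * C (p k) * X (Sum.inr k)) * epsC_sq n e k
  have s1 : (∑ k : Fin n,
      2 * ((C (eps n e k) * X (Sum.inl k) * X (Sum.inr k)) * hermPolyP n e p))
      = 2 * (hermPoly n e * hermPolyP n e p) := by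
    rw [← Finset.mul_sum, ← Finset.sum_mul]
    rfl
  have s2 : (∑ _k : Fin n, 2 * (hermPoly n e * hermPolyP n e p))
      = C (n : ℂ) * (2 * (hermPoly n e * hermPolyP n e p)) := by
    rw [Finset.sum_const, Finset.card_univ, Fintype.card_fin, nsmul_eq_mul,
      show ((n : ℕ) : MvPolynomial (Fin n ⊕ Fin n) ℂ) = C (n : ℂ) by simp]
  have s3 : (∑ k : Fin n,
      2 * (hermPoly n e * (C (eps n e k) * C (p k) * X (Sum.inr k))))
      = 2 * (hermPoly n e * hermPolyP n e p) := by
    rw [← Finset.mul_sum, ← Finset.mul_sum]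
    rfl
  rw [Finset.sum_congr rfl (fun k _ => h k), Finset.sum_add_distrib, Finset.sum_add_distrib,
    s1, s2, s3,
    show (C (2 * (n : ℂ) + 4) : MvPolynomial (Fin n ⊕ Fin n) ℂ)
      = 2 * C (n : ℂ) + 4 by simp [map_add, map_mul, map_ofNat]]
  ring

lemma lap_C_mul (n e : ℕ) (c : ℂ) (f : MvPolynomial (Fin n ⊕ Fin n) ℂ) :
    Lap n e (C c * f) = C c * Lap n e f := by
  unfold Lap
  rw [Finset.mul_sum]
  apply Finset.sum_congr rfl
  intro k _
  simp [pderiv_mul]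
  ring


/-- `Δ²{⟨z,z⟩²⟨p,z⟩} = 2(n+1)(n+2)⟨p,z⟩`. -/
theorem stmt2 (n e : ℕ) (he : e ≤ n) (p : Fin n → ℂ) :
    Lap n e (Lap n e (hermPoly n e ^ 2 * hermPolyP n e p)) =
      C (2 * ((n : ℂ) + 1) * ((n : ℂ) + 2)) * hermPolyP n e p := by
  rw [lap_Q2P, lap_C_mul, lap_QP, ← mul_assoc, ← map_mul]
  congr 1
  ring
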